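/- Let K and L be mutually dual closed convex cones in a real Hilbert space H. If the metric projection P_K is K-isotone (v − u ∈ K implies P_K(v) − P_K(u) ∈ K), then P_K is L-isotone (v − u ∈ L implies P_K(v) − P_K(u) ∈ L). -/

import Mathlib

open RealInnerProductSpace

variable {H : Type*} [NormedAddCommGroup H] [InnerProductSpace ℝ H] [CompleteSpace H]

/-- `K` is a closed convex cone (containing `0`). -/
def IsClosedConvexCone (K : Set H) : Prop :=
  IsClosed K ∧ (0 : H) ∈ K ∧ (∀ x ∈ K, ∀ y ∈ K, x + y ∈ K) ∧
    ∀ x ∈ K, ∀ t : ℝ, 0 ≤ t → t • x ∈ K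

/-- The dual cone of a set. -/
def dualSet (K : Set H) : Set H := {y | ∀ x ∈ K, 0 ≤ ⟪x, y⟫}

/-- `P` is the metric projection onto `D`. -/
def IsMetricProj (D : Set H) (P : H → H) : Prop :=
  ∀ x, P x ∈ D ∧ ∀ y ∈ D, ‖x - P x‖ ≤ ‖x - y‖

/-- The translate `x - K`. -/
def meetSet (K : Set H) (x : H) : Set H := {z | ∃ k ∈ K, z = x - k}

/-- The translate `x + K`. -/
def joinSet (K : Set H) (x : H) : Set H := {z | ∃ k ∈ K, z = x + k}

set_option linter.unusedSectionVars false

theorem my_var (K : Set H) (hK : IsClosedConvexCone K) (PK : H → H) (hPK : IsMetricProj K PK)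
    (z y : H) (hy : y ∈ K) : ⟪z - PK z, y - PK z⟫ ≤ 0 := by
  obtain ⟨-, h0, hadd, hsmul⟩ := hK
  have hpK : PK z ∈ K := (hPK z).1
  have key : ∀ t : ℝ, 0 < t → t ≤ 1 → 2 * ⟪z - PK z, y - PK z⟫ ≤ t * ‖y - PK z‖ ^ 2 := by
    intro t ht ht1
    have hw : PK z + t • (y - PK z) ∈ K := by
      have h1 : (1 - t) • PK z ∈ K := hsmul _ hpK _ (by linarith)
      have h2 : t • y ∈ K := hsmul _ hy _ ht.le
      have h3 := hadd _ h1 _ h2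
      have he : PK z + t • (y - PK z) = (1 - t) • PK z + t • y := by module
      rwa [he]
    have hle := (hPK z).2 _ hw
    have hsq : ‖z - PK z‖ ^ 2 ≤ ‖z - (PK z + t • (y - PK z))‖ ^ 2 := by
      nlinarith [norm_nonneg (z - PK z), norm_nonneg (z - (PK z + t • (y - PK z)))]
    have he2 : z - (PK z + t • (y - PK z)) = (z - PK z) - t • (y - PK z) := by abel
    rw [he2] at hsq
    have hnt : ‖t‖ = t := by rw [Real.norm_eq_abs, abs_of_pos ht]
    have hexp : ‖(z - PK z) - t • (y - PK z)‖ ^ 2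
        = ‖z - PK z‖ ^ 2 - 2 * (t * ⟪z - PK z, y - PK z⟫) + (t * ‖y - PK z‖) ^ 2 := by
      rw [norm_sub_sq_real, real_inner_smul_right, norm_smul, hnt]
    rw [hexp] at hsq
    nlinarith [sq_nonneg ‖y - PK z‖]
  by_contra hcon
  push_neg at hcon
  set c := ⟪z - PK z, y - PK z⟫ with hc
  set M := ‖y - PK z‖ ^ 2 with hM
  have hM0 : (0:ℝ) ≤ M := sq_nonneg _
  have htpos : (0:ℝ) < min 1 (c / (M + 1)) :=
    lt_min one_pos (div_pos hcon (by linarith))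
  have hkey := key _ htpos (min_le_left _ _)
  have h2 : min 1 (c / (M + 1)) * M ≤ (c / (M + 1)) * M :=
    mul_le_mul_of_nonneg_right (min_le_right _ _) hM0
  have h3 : (c / (M + 1)) * M < 2 * c := by
    rw [div_mul_eq_mul_div, div_lt_iff₀ (by linarith)]
    nlinarith
  linarith

theorem my_orth (K : Set H) (hK : IsClosedConvexCone K) (PK : H → H) (hPK : IsMetricProj K PK)
    (z : H) : ⟪z - PK z, PK z⟫ = 0 := by
  have h0 := hK.2.1
  have hsmul := hK.2.2.2
  have hpK : PK z ∈ K := (hPK z).1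
  have h1 := my_var K hK PK hPK z 0 h0
  rw [zero_sub, inner_neg_right] at h1
  have h2 := my_var K hK PK hPK z ((2:ℝ) • PK z) (hsmul _ hpK 2 (by norm_num))
  have he : (2:ℝ) • PK z - PK z = PK z := by module
  rw [he] at h2
  linarith

theorem my_nonpos (K : Set H) (hK : IsClosedConvexCone K) (PK : H → H) (hPK : IsMetricProj K PK)
    (z y : H) (hy : y ∈ K) : ⟪z - PK z, y⟫ ≤ 0 := by
  have h1 := my_var K hK PK hPK z y hy
  have h2 := my_orth K hK PK hPK z
  rw [inner_sub_right] at h1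
  linarith

theorem my_grad (K : Set H) (hK : IsClosedConvexCone K) (PK : H → H) (hPK : IsMetricProj K PK)
    (z w : H) : 2 * ⟪PK z, w - z⟫ ≤ ‖PK w‖ ^ 2 - ‖PK z‖ ^ 2 := by
  have h1 : ⟪w - PK w, PK z⟫ ≤ 0 := my_nonpos K hK PK hPK w (PK z) (hPK z).1
  have h2 : ⟪PK z, PK w⟫ ≤ ‖PK z‖ * ‖PK w‖ := real_inner_le_norm _ _
  have h3 : ⟪z - PK z, PK z⟫ = 0 := my_orth K hK PK hPK z
  rw [inner_sub_left, real_inner_self_eq_norm_sq] at h3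
  rw [inner_sub_left] at h1
  rw [inner_sub_right]
  nlinarith [sq_nonneg (‖PK w‖ - ‖PK z‖), real_inner_comm w (PK z),
    real_inner_comm z (PK z), real_inner_comm (PK w) (PK z)]

theorem my_lip (K : Set H) (hK : IsClosedConvexCone K) (PK : H → H) (hPK : IsMetricProj K PK)
    (z w : H) : ‖PK z - PK w‖ ≤ ‖z - w‖ := by
  have h1 := my_var K hK PK hPK z (PK w) (hPK w).1
  have h2 := my_var K hK PK hPK w (PK z) (hPK z).1
  have key : ‖PK z - PK w‖ ^ 2 ≤ ⟪z - w, PK z - PK w⟫ := by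
    have e1 : ⟪z - PK z, PK z - PK w⟫ = -⟪z - PK z, PK w - PK z⟫ := by
      rw [← inner_neg_right]; congr 1; abel
    have e2 : ⟪(z - w) - (PK z - PK w), PK z - PK w⟫
        = ⟪z - PK z, PK z - PK w⟫ - ⟪w - PK w, PK z - PK w⟫ := by
      rw [← inner_sub_left]; congr 1; abel
    have e3 : ⟪(z - w) - (PK z - PK w), PK z - PK w⟫
        = ⟪z - w, PK z - PK w⟫ - ‖PK z - PK w‖ ^ 2 := by
      rw [inner_sub_left, real_inner_self_eq_norm_sq]
    rw [e2, e1] at e3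
    linarith
  have h4 : ⟪z - w, PK z - PK w⟫ ≤ ‖z - w‖ * ‖PK z - PK w‖ := real_inner_le_norm _ _
  rcases eq_or_lt_of_le (norm_nonneg (PK z - PK w)) with h5 | h5
  · rw [← h5]; exact norm_nonneg _
  · nlinarith

theorem my_step (K : Set H) (hK : IsClosedConvexCone K) (PK : H → H) (hPK : IsMetricProj K PK)
    (l κ : H) (hlmono : ∀ w : H, 0 ≤ ⟪l, PK (w + κ) - PK w⟫)
    (a : H) (s : ℝ) (hs : 0 ≤ s) :
    -(2 * s ^ 2 * ‖l‖ ^ 2) ≤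
      (‖PK (a + κ + s • l)‖ ^ 2 - ‖PK (a + κ)‖ ^ 2) - (‖PK (a + s • l)‖ ^ 2 - ‖PK a‖ ^ 2) := by
  have hA : 2 * ⟪PK (a + κ), s • l⟫ ≤ ‖PK (a + κ + s • l)‖ ^ 2 - ‖PK (a + κ)‖ ^ 2 := by
    have := my_grad K hK PK hPK (a + κ) (a + κ + s • l)
    rwa [add_sub_cancel_left] at this
  have hB : ‖PK (a + s • l)‖ ^ 2 - ‖PK a‖ ^ 2 ≤ 2 * ⟪PK (a + s • l), s • l⟫ := by
    have := my_grad K hK PK hPK (a + s • l) a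
    have he : a - (a + s • l) = -(s • l) := by abel
    rw [he, inner_neg_right] at this
    linarith
  have h1 : 0 ≤ ⟪PK (a + κ) - PK a, s • l⟫ := by
    rw [real_inner_smul_right]
    have := hlmono a
    rw [real_inner_comm] at this
    exact mul_nonneg hs this
  have h2 : -(s ^ 2 * ‖l‖ ^ 2) ≤ ⟪PK a - PK (a + s • l), s • l⟫ := by
    have hc : |⟪PK a - PK (a + s • l), s • l⟫| ≤ ‖PK a - PK (a + s • l)‖ * ‖s • l‖ :=
      abs_real_inner_le_norm _ _
    have hlp : ‖PK a - PK (a + s • l)‖ ≤ ‖a - (a + s • l)‖ := my_lip K hK PK hPK _ _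
    have he2 : ‖a - (a + s • l)‖ = ‖s • l‖ := by
      rw [show a - (a + s • l) = -(s • l) by abel, norm_neg]
    have hns : ‖s • l‖ = s * ‖l‖ := by
      rw [norm_smul, Real.norm_eq_abs, abs_of_nonneg hs]
    have h3 : |⟪PK a - PK (a + s • l), s • l⟫| ≤ s ^ 2 * ‖l‖ ^ 2 := by
      calc |⟪PK a - PK (a + s • l), s • l⟫| ≤ ‖PK a - PK (a + s • l)‖ * ‖s • l‖ := hc
        _ ≤ ‖s • l‖ * ‖s • l‖ := by
            apply mul_le_mul_of_nonneg_right _ (norm_nonneg _)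
            rw [← he2]; exact hlp
        _ = s ^ 2 * ‖l‖ ^ 2 := by rw [hns]; ring
    have := neg_abs_le ⟪PK a - PK (a + s • l), s • l⟫
    linarith
  have hsplit : ⟪PK (a + κ) - PK (a + s • l), s • l⟫
      = ⟪PK (a + κ) - PK a, s • l⟫ + ⟪PK a - PK (a + s • l), s • l⟫ := by
    rw [← inner_add_left]; congr 1; abel
  have h4 : -(2 * s ^ 2 * ‖l‖ ^ 2) ≤ 2 * ⟪PK (a + κ) - PK (a + s • l), s • l⟫ := by
    rw [hsplit]; linarith
  rw [inner_sub_left] at h4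
  linarith

theorem my_phi (K : Set H) (hK : IsClosedConvexCone K) (PK : H → H) (hPK : IsMetricProj K PK)
    (l κ : H) (hlmono : ∀ w : H, 0 ≤ ⟪l, PK (w + κ) - PK w⟫) (z : H) :
    ‖PK (z + l)‖ ^ 2 - ‖PK z‖ ^ 2 ≤ ‖PK (z + κ + l)‖ ^ 2 - ‖PK (z + κ)‖ ^ 2 := by
  have main : ∀ m : ℕ, 0 < m →
      ‖PK (z + l)‖ ^ 2 - ‖PK z‖ ^ 2
        ≤ ‖PK (z + κ + l)‖ ^ 2 - ‖PK (z + κ)‖ ^ 2 + 2 * ‖l‖ ^ 2 / m := by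
    intro m hm
    have hm0 : ((m : ℝ)) ≠ 0 := Nat.cast_ne_zero.mpr hm.ne'
    have hmpos : (0 : ℝ) < m := Nat.cast_pos.mpr hm
    set s : ℝ := 1 / (m : ℝ) with hs
    have hs0 : 0 ≤ s := by positivity
    set F : ℕ → ℝ := fun j =>
      ‖PK ((z + ((j : ℝ) * s) • l) + κ)‖ ^ 2 - ‖PK (z + ((j : ℝ) * s) • l)‖ ^ 2 with hF
    have hstep : ∀ j : ℕ, -(2 * s ^ 2 * ‖l‖ ^ 2) ≤ F (j + 1) - F j := by
      intro j
      have h := my_step K hK PK hPK l κ hlmono (z + ((j : ℝ) * s) • l) s hs0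
      have e2 : z + (((j + 1 : ℕ) : ℝ) * s) • l = (z + ((j : ℝ) * s) • l) + s • l := by
        push_cast
        module
      have e3 : (z + ((j : ℝ) * s) • l) + κ + s • l = ((z + ((j : ℝ) * s) • l) + s • l) + κ := by
        abel
      show -(2 * s ^ 2 * ‖l‖ ^ 2) ≤
        (‖PK ((z + (((j + 1 : ℕ) : ℝ) * s) • l) + κ)‖ ^ 2 - ‖PK (z + (((j + 1 : ℕ) : ℝ) * s) • l)‖ ^ 2)
          - (‖PK ((z + ((j : ℝ) * s) • l) + κ)‖ ^ 2 - ‖PK (z + ((j : ℝ) * s) • l)‖ ^ 2)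
      rw [e2, ← e3]
      linarith [h]
    have hsum : F m - F 0 = ∑ i ∈ Finset.range m, (F (i + 1) - F i) :=
      (Finset.sum_range_sub F m).symm
    have hbound : (m : ℝ) * (-(2 * s ^ 2 * ‖l‖ ^ 2)) ≤ ∑ i ∈ Finset.range m, (F (i + 1) - F i) := by
      have h := Finset.card_nsmul_le_sum (Finset.range m)
        (fun i => F (i + 1) - F i) (-(2 * s ^ 2 * ‖l‖ ^ 2)) (fun i _ => hstep i)
      rwa [Finset.card_range, nsmul_eq_mul] at h
    have hFm : F m = ‖PK ((z + l) + κ)‖ ^ 2 - ‖PK (z + l)‖ ^ 2 := by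
      have e : ((m : ℝ) * s) = 1 := by rw [hs, mul_one_div, div_self hm0]
      show ‖PK ((z + ((m : ℝ) * s) • l) + κ)‖ ^ 2 - ‖PK (z + ((m : ℝ) * s) • l)‖ ^ 2 = _
      rw [e, one_smul]
    have hF0 : F 0 = ‖PK (z + κ)‖ ^ 2 - ‖PK z‖ ^ 2 := by
      show ‖PK ((z + (((0 : ℕ) : ℝ) * s) • l) + κ)‖ ^ 2 - ‖PK (z + (((0 : ℕ) : ℝ) * s) • l)‖ ^ 2 = _
      norm_num
    have hcalc : (m : ℝ) * (-(2 * s ^ 2 * ‖l‖ ^ 2)) = -(2 * ‖l‖ ^ 2 / m) := by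
      rw [hs]; field_simp
    have e4 : z + κ + l = (z + l) + κ := by abel
    rw [e4]
    rw [hFm, hF0] at hsum
    rw [hcalc] at hbound
    linarith [hsum ▸ hbound]
  refine le_of_forall_pos_le_add ?_
  intro ε hε
  obtain ⟨m, hm⟩ := exists_nat_gt (2 * ‖l‖ ^ 2 / ε)
  have hmpos : 0 < m := by
    rcases Nat.eq_zero_or_pos m with h | h
    · exfalso
      subst h
      have hp : (0:ℝ) ≤ 2 * ‖l‖ ^ 2 / ε := by positivity
      simp only [Nat.cast_zero] at hm
      linarith
    · exact h
  have h1 := main m hmpos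
  have hmr : (0:ℝ) < m := Nat.cast_pos.mpr hmpos
  have h2 : 2 * ‖l‖ ^ 2 / m ≤ ε := by
    rw [div_le_iff₀ hmr]
    rw [div_lt_iff₀ hε] at hm
    linarith
  linarith

theorem K_isotone_implies_L_isotone (K L : Set H) (hK : IsClosedConvexCone K)
    (hL : L = dualSet K) (hKL : K = dualSet L)
    (PK : H → H) (hPK : IsMetricProj K PK)
    (hiso : ∀ u v : H, v - u ∈ K → PK v - PK u ∈ K) :
    ∀ u v : H, v - u ∈ L → PK v - PK u ∈ L := by
  intro u v huv
  have hsmul := hK.2.2.2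
  have hdual : v - u ∈ dualSet K := hL ▸ huv
  have hlmonoK : ∀ κ : H, κ ∈ K → ∀ w : H, 0 ≤ ⟪v - u, PK (w + κ) - PK w⟫ := by
    intro κ hκ w
    have hmem : PK (w + κ) - PK w ∈ K := hiso w (w + κ) (by rw [add_sub_cancel_left]; exact hκ)
    have h2 := hdual _ hmem
    rwa [real_inner_comm] at h2
  rw [hL]
  intro x hx
  have key : ∀ ε : ℝ, 0 < ε → 0 ≤ ⟪x, PK (v + ε • x) - PK u⟫ := by
    intro ε hε
    have hκ : ε • x ∈ K := hsmul _ hx _ hε.le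
    have hphi := my_phi K hK PK hPK (v - u) (ε • x) (hlmonoK _ hκ) u
    have e1 : u + (v - u) = v := by abel
    have e2 : u + ε • x + (v - u) = v + ε • x := by abel
    rw [e1, e2] at hphi
    have hA : 2 * ⟪PK u, ε • x⟫ ≤ ‖PK (u + ε • x)‖ ^ 2 - ‖PK u‖ ^ 2 := by
      have := my_grad K hK PK hPK u (u + ε • x)
      rwa [add_sub_cancel_left] at this
    have hB : ‖PK (v + ε • x)‖ ^ 2 - ‖PK v‖ ^ 2 ≤ 2 * ⟪PK (v + ε • x), ε • x⟫ := by
      have := my_grad K hK PK hPK (v + ε • x) v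
      have he : v - (v + ε • x) = -(ε • x) := by abel
      rw [he, inner_neg_right] at this
      linarith
    have hcomb : ⟪PK u, ε • x⟫ ≤ ⟪PK (v + ε • x), ε • x⟫ := by linarith
    rw [real_inner_smul_right, real_inner_smul_right] at hcomb
    have h3 : ⟪PK u, x⟫ ≤ ⟪PK (v + ε • x), x⟫ := (mul_le_mul_iff_right₀ hε).mp hcomb
    rw [inner_sub_right]
    have c1 := real_inner_comm x (PK (v + ε • x))
    have c2 := real_inner_comm x (PK u)
    linarith
  have hgoal : ∀ ε : ℝ, 0 < ε → -ε ≤ ⟪x, PK v - PK u⟫ := by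
    intro ε hε
    set δ : ℝ := ε / (‖x‖ ^ 2 + 1) with hδ
    have hδ0 : 0 < δ := by positivity
    have hsplit : ⟪x, PK v - PK u⟫
        = ⟪x, PK v - PK (v + δ • x)⟫ + ⟪x, PK (v + δ • x) - PK u⟫ := by
      rw [← inner_add_right]; congr 1; abel
    have h1 := key δ hδ0
    have h2 : |⟪x, PK v - PK (v + δ • x)⟫| ≤ δ * ‖x‖ ^ 2 := by
      calc |⟪x, PK v - PK (v + δ • x)⟫| ≤ ‖x‖ * ‖PK v - PK (v + δ • x)‖ :=
            abs_real_inner_le_norm _ _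
        _ ≤ ‖x‖ * ‖v - (v + δ • x)‖ := by
            apply mul_le_mul_of_nonneg_left (my_lip K hK PK hPK _ _) (norm_nonneg _)
        _ = δ * ‖x‖ ^ 2 := by
            rw [show v - (v + δ • x) = -(δ • x) by abel, norm_neg, norm_smul,
              Real.norm_eq_abs, abs_of_pos hδ0]
            ring
    have h3 : δ * ‖x‖ ^ 2 ≤ ε := by
      rw [hδ, div_mul_eq_mul_div, div_le_iff₀ (by positivity)]
      nlinarith [sq_nonneg ‖x‖]
    have := neg_abs_le ⟪x, PK v - PK (v + δ • x)⟫
    linarith [hsplit]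
  by_contra hcon
  push_neg at hcon
  have := hgoal (-⟪x, PK v - PK u⟫ / 2) (by linarith)
  linarith
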